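/- arXiv:2402.12703 — 3 statements merged into one kernel-verified Lean document; each statement's English description precedes it below -/
import Mathlib

section
/- Let N ≥ 1, x₀ ∈ ℝ^N, R > 0 and λ > 0, and let u : ℝ^N → ℝ be continuously differentiable on a neighborhood of the closed ball B_R(x₀). Then (1/(16λ)) ∫_{B_R(x₀)} ‖x − x₀‖² u(x)² e^{−‖x − x₀‖²/(4λ)} dx ≤ (N/4) ∫_{B_R(x₀)} u(x)² e^{−‖x − x₀‖²/(4λ)} dx + λ ∫_{B_R(x₀)} ‖∇u(x)‖² e^{−‖x − x₀‖²/(4λ)} dx. -/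
open MeasureTheory

section Aux
open Metric Set
variable {n : ℕ}
local notation "E" => EuclideanSpace ℝ (Fin (n+1))
local notation "⟪" x ", " y "⟫" => @inner ℝ _ _ x y



noncomputable def sliceMap (i : Fin (n+1)) : (ℝ × (Fin n → ℝ)) ≃ᵐ EuclideanSpace ℝ (Fin (n+1)) :=
  ((MeasurableEquiv.piFinSuccAbove (fun _ : Fin (n+1) => ℝ) i).symm).trans
    (MeasurableEquiv.toLp 2 (Fin (n+1) → ℝ))

lemma sliceMap_measurePreserving (i : Fin (n+1)) :
    MeasurePreserving (sliceMap (n := n) i) volume volume :=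
  ((EuclideanSpace.volume_preserving_symm_measurableEquiv_toLp (Fin (n+1))).symm).comp
    ((volume_preserving_piFinSuccAbove (fun _ : Fin (n+1) => ℝ) i).symm)

lemma sliceMap_apply_same (i : Fin (n+1)) (t : ℝ) (y : Fin n → ℝ) :
    sliceMap (n := n) i (t, y) i = t := by
  simp [sliceMap, MeasurableEquiv.coe_toLp, MeasurableEquiv.piFinSuccAbove_symm_apply, Fin.insertNthEquiv]

lemma sliceMap_apply_succAbove (i : Fin (n+1)) (t : ℝ) (y : Fin n → ℝ) (j : Fin n) :
    sliceMap (n := n) i (t, y) (i.succAbove j) = y j := by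
  simp [sliceMap, MeasurableEquiv.coe_toLp, MeasurableEquiv.piFinSuccAbove_symm_apply, Fin.insertNthEquiv]

lemma sliceMap_line (i : Fin (n+1)) (t : ℝ) (y : Fin n → ℝ) :
    sliceMap (n := n) i (t, y)
      = sliceMap (n := n) i (0, y) + t • EuclideanSpace.single i (1:ℝ) := by
  ext j
  by_cases hj : j = i
  · subst hj; simp [sliceMap_apply_same, EuclideanSpace.single_apply]
  · obtain ⟨k, rfl⟩ := Fin.exists_succAbove_eq hj
    simp [sliceMap_apply_succAbove, EuclideanSpace.single_apply, Fin.succAbove_ne i k]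

lemma sliceMap_mem_closedBall (i : Fin (n+1)) (x₀ : E) (R : ℝ) (hR : 0 ≤ R)
    (t : ℝ) (y : Fin n → ℝ) :
    sliceMap (n := n) i (t, y) ∈ closedBall x₀ R ↔
      (t - x₀ i)^2 + ∑ j : Fin n, (y j - x₀ (i.succAbove j))^2 ≤ R^2 := by
  rw [mem_closedBall, EuclideanSpace.dist_eq, ← Real.sqrt_sq hR,
    Real.sqrt_le_sqrt_iff (by positivity)]
  rw [Fin.sum_univ_succAbove (fun j => dist (sliceMap (n := n) i (t, y) j) (x₀ j) ^ 2) i]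
  rw [Real.sq_sqrt (by positivity)]
  simp [sliceMap_apply_same, sliceMap_apply_succAbove, Real.dist_eq, sq_abs]

set_option maxHeartbeats 1000000 in
lemma slice_nonneg (x₀ : E) {R : ℝ} (hR : 0 < R)
    {s : Set E} (hs : IsOpen s) (hball : closedBall x₀ R ⊆ s)
    {Φ : E → ℝ} (hΦ : ContDiffOn ℝ 1 Φ s) (hΦ0 : ∀ x, 0 ≤ Φ x) (i : Fin (n+1)) :
    0 ≤ ∫ x in closedBall x₀ R,
        (Φ x + (x i - x₀ i) * fderiv ℝ Φ x (EuclideanSpace.single i (1:ℝ))) := by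
  set v : E := EuclideanSpace.single i (1:ℝ) with hv
  set B : Set E := closedBall x₀ R with hB
  set h : E → ℝ := fun x => Φ x + (x i - x₀ i) * fderiv ℝ Φ x v with hh
  have hd : ∀ x ∈ s, HasFDerivAt Φ (fderiv ℝ Φ x) x := fun x hx =>
    (hΦ.differentiableOn one_ne_zero).differentiableAt (hs.mem_nhds hx) |>.hasFDerivAt
  have hfc : ContinuousOn (fderiv ℝ Φ) s := hΦ.continuousOn_fderiv_of_isOpen hs le_rfl
  have hΦc : ContinuousOn Φ s := hΦ.continuousOn
  have hcont : ContinuousOn h s := by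
    apply hΦc.add
    apply ContinuousOn.mul
    · exact (((EuclideanSpace.proj i).continuous.sub continuous_const).comp_continuousOn'
        continuousOn_id)
    · exact (ContinuousLinearMap.apply ℝ ℝ v).continuous.comp_continuousOn hfc
  have hInt : IntegrableOn h B := (hcont.mono hball).integrableOn_compact
    (isCompact_closedBall _ _)
  have hpres := sliceMap_measurePreserving (n := n) i
  rw [← integral_indicator (measurableSet_closedBall)]
  rw [← hpres.integral_comp (sliceMap (n := n) i).measurableEmbedding]
  have hIntc : Integrable (fun p => B.indicator h (sliceMap (n := n) i p)) volume :=
    (hpres.integrable_comp_emb (sliceMap (n := n) i).measurableEmbedding).mpr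
      ((integrable_indicator_iff measurableSet_closedBall).mpr hInt)
  rw [Measure.volume_eq_prod] at hIntc ⊢
  rw [integral_prod_symm _ hIntc]
  apply integral_nonneg
  intro y
  simp only [Pi.zero_apply]
  set c := x₀ i with hc
  set m := ∑ j : Fin n, (y j - x₀ (i.succAbove j))^2 with hm
  have hmem : ∀ t : ℝ, sliceMap (n := n) i (t, y) ∈ B ↔ (t - c)^2 + m ≤ R^2 :=
    fun t => sliceMap_mem_closedBall i x₀ R hR.le t y
  by_cases hcase : m ≤ R^2
  · -- nonempty slice
    set ρ := Real.sqrt (R^2 - m) with hρ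
    have hρ0 : 0 ≤ ρ := Real.sqrt_nonneg _
    have hρsq : ρ^2 = R^2 - m := Real.sq_sqrt (by linarith)
    have hIcc : ∀ t : ℝ, sliceMap (n := n) i (t, y) ∈ B ↔ t ∈ Icc (c - ρ) (c + ρ) := by
      intro t
      rw [hmem t, mem_Icc]
      constructor
      · intro ht; constructor <;> nlinarith
      · rintro ⟨h1, h2⟩; nlinarith
    set γ : ℝ → E := fun t => sliceMap (n := n) i (t, y) with hγ
    have hγd : ∀ t : ℝ, HasDerivAt γ v t := by
      intro t
      have hline : γ = fun t => sliceMap (n := n) i (0, y) + t • v :=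
        funext fun t => sliceMap_line i t y
      rw [hline]
      simpa using ((hasDerivAt_id t).smul_const v).const_add (sliceMap (n := n) i (0, y))
    have hγcont : Continuous γ := by
      have hline : γ = fun t => sliceMap (n := n) i (0, y) + t • v :=
        funext fun t => sliceMap_line i t y
      rw [hline]; continuity
    have hγmem : ∀ t ∈ Icc (c - ρ) (c + ρ), γ t ∈ s := fun t ht => hball ((hIcc t).mpr ht)
    have hcoord : ∀ t : ℝ, γ t i = t := fun t => sliceMap_apply_same i t y
    have hab : c - ρ ≤ c + ρ := by linarith
    have hindic : (fun t => B.indicator h (sliceMap (n := n) i (t, y)))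
        = (Icc (c - ρ) (c + ρ)).indicator (fun t => h (γ t)) := by
      funext t
      by_cases ht : t ∈ Icc (c - ρ) (c + ρ)
      · rw [indicator_of_mem ht, indicator_of_mem ((hIcc t).mpr ht)]
      · rw [indicator_of_notMem ht, indicator_of_notMem (fun hmem' => ht ((hIcc t).mp hmem'))]
    rw [hindic, integral_indicator measurableSet_Icc, integral_Icc_eq_integral_Ioc,
      ← intervalIntegral.integral_of_le hab]
    have hG : ∀ t ∈ Set.uIcc (c - ρ) (c + ρ),
        HasDerivAt (fun t => (t - c) * Φ (γ t)) (h (γ t)) t := by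
      intro t ht
      rw [Set.uIcc_of_le hab] at ht
      have hts : γ t ∈ s := hγmem t ht
      have hΦγ : HasDerivAt (fun t => Φ (γ t)) (fderiv ℝ Φ (γ t) v) t :=
        (hd (γ t) hts).comp_hasDerivAt t (hγd t)
      have := ((hasDerivAt_id t).sub_const c).mul hΦγ
      refine this.congr_deriv (Eq.symm ?_)
      rw [hh]
      simp only [hcoord t, id_eq]
      ring
    have hHint : IntervalIntegrable (fun t => h (γ t)) volume (c - ρ) (c + ρ) := by
      apply ContinuousOn.intervalIntegrable
      rw [Set.uIcc_of_le hab]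
      exact hcont.comp hγcont.continuousOn hγmem
    rw [intervalIntegral.integral_eq_sub_of_hasDerivAt hG hHint]
    have hb : c + ρ - c = ρ := by ring
    have ha : c - ρ - c = -ρ := by ring
    rw [hb, ha]
    nlinarith [hΦ0 (γ (c + ρ)), hΦ0 (γ (c - ρ))]
  · -- empty slice
    have : (fun t => B.indicator h (sliceMap (n := n) i (t, y))) = fun _ => 0 := by
      funext t
      apply indicator_of_notMem
      rw [hmem t]
      push_neg at hcase ⊢
      nlinarith [sq_nonneg (t - c)]
    rw [this]
    simp

lemma div_nonneg_ball (x₀ : E) {R : ℝ} (hR : 0 < R)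
    {s : Set E} (hs : IsOpen s) (hball : closedBall x₀ R ⊆ s)
    {Φ : E → ℝ} (hΦ : ContDiffOn ℝ 1 Φ s) (hΦ0 : ∀ x, 0 ≤ Φ x) :
    0 ≤ ∫ x in closedBall x₀ R, (((n:ℝ)+1) * Φ x + fderiv ℝ Φ x (x - x₀)) := by
  have hfc : ContinuousOn (fderiv ℝ Φ) s := hΦ.continuousOn_fderiv_of_isOpen hs le_rfl
  have hΦc : ContinuousOn Φ s := hΦ.continuousOn
  have hid : ∀ x : E, ((n:ℝ)+1) * Φ x + fderiv ℝ Φ x (x - x₀)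
      = ∑ i : Fin (n+1),
          (Φ x + (x i - x₀ i) * fderiv ℝ Φ x (EuclideanSpace.single i (1:ℝ))) := by
    intro x
    have hdecomp : x - x₀ = ∑ i : Fin (n+1), (x i - x₀ i) • EuclideanSpace.single i (1:ℝ) := by
      ext j
      rw [PiLp.sub_apply, WithLp.ofLp_sum, Finset.sum_apply]
      simp [EuclideanSpace.single_apply]
    rw [hdecomp, map_sum, Finset.sum_add_distrib, Finset.sum_const, Finset.card_univ]
    simp only [_root_.map_smul, smul_eq_mul, Fintype.card_fin, nsmul_eq_mul]
    push_cast
    ring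
  have hint : ∀ i : Fin (n+1), IntegrableOn
      (fun x => Φ x + (x i - x₀ i) * fderiv ℝ Φ x (EuclideanSpace.single i (1:ℝ)))
      (closedBall x₀ R) := by
    intro i
    apply ContinuousOn.integrableOn_compact (isCompact_closedBall _ _)
    apply ContinuousOn.mono _ hball
    apply hΦc.add
    apply ContinuousOn.mul
    · exact (((EuclideanSpace.proj i).continuous.sub continuous_const).comp_continuousOn'
        continuousOn_id)
    · exact (ContinuousLinearMap.apply ℝ ℝ _).continuous.comp_continuousOn hfc
  have h1 : (∫ x in closedBall x₀ R, (((n:ℝ)+1) * Φ x + fderiv ℝ Φ x (x - x₀)))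
      = ∑ i : Fin (n+1), ∫ x in closedBall x₀ R,
          (Φ x + (x i - x₀ i) * fderiv ℝ Φ x (EuclideanSpace.single i (1:ℝ))) := by
    rw [← integral_finset_sum _ (fun i _ => hint i)]
    exact setIntegral_congr_fun measurableSet_closedBall (fun x _ => hid x)
  rw [h1]
  exact Finset.sum_nonneg fun i _ => slice_nonneg x₀ hR hs hball hΦ hΦ0 i

lemma norm_sq_hasFDerivAt (x₀ x : E) :
    HasFDerivAt (fun y : E => ‖y - x₀‖^2) ((2:ℝ) • innerSL ℝ (x - x₀)) x := by
  have h1 : HasFDerivAt (fun y : E => y - x₀) (ContinuousLinearMap.id ℝ E) x :=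
    (hasFDerivAt_id x).sub_const x₀
  have h2 := h1.inner ℝ h1
  have heq : (fun y : E => ⟪y - x₀, y - x₀⟫) = fun y : E => ‖y - x₀‖^2 :=
    funext fun y => real_inner_self_eq_norm_sq _
  rw [heq] at h2
  refine h2.congr_fderiv (Eq.symm ?_)
  ext v
  simp only [ContinuousLinearMap.smul_apply, innerSL_apply_apply, fderivInnerCLM_apply,
    ContinuousLinearMap.comp_apply, ContinuousLinearMap.prod_apply,
    ContinuousLinearMap.coe_id', id_eq, smul_eq_mul]
  rw [real_inner_comm]
  ring

lemma phi_hasFDerivAt (x₀ : E) {lam : ℝ} (hlam : 0 < lam) {u : E → ℝ} {x : E}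
    (hux : HasFDerivAt u (fderiv ℝ u x) x) :
    HasFDerivAt (fun y : E => (u y)^2 * Real.exp (-‖y - x₀‖^2 / (4*lam)))
      ((2 * u x * Real.exp (-‖x - x₀‖^2 / (4*lam))) • fderiv ℝ u x
        + (-((u x)^2 * Real.exp (-‖x - x₀‖^2 / (4*lam))) / (2*lam)) • innerSL ℝ (x - x₀)) x := by
  have hq : HasFDerivAt (fun y : E => -‖y - x₀‖^2 / (4*lam))
      ((-(1/(4*lam))) • (2:ℝ) • innerSL ℝ (x - x₀)) x := by
    have h := (norm_sq_hasFDerivAt x₀ x).const_mul (-(1/(4*lam)))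
    have hfun : (fun y : E => -(1/(4*lam)) * ‖y - x₀‖^2)
        = fun y : E => -‖y - x₀‖^2 / (4*lam) := funext fun y => by ring
    rwa [hfun] at h
  have hw := hq.exp
  have hu2 : HasFDerivAt (fun y : E => (u y)^2) ((2 * u x) • fderiv ℝ u x) x := by
    have h := hux.mul hux
    have hfun : (u * u) = fun y : E => (u y)^2 := funext fun y => by simp only [Pi.mul_apply]; ring
    rw [hfun] at h
    refine h.congr_fderiv (Eq.symm ?_)
    rw [two_mul, add_smul]
  have hm := hu2.mul hw
  refine hm.congr_fderiv (Eq.symm ?_)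
  ext v
  simp only [ContinuousLinearMap.add_apply, ContinuousLinearMap.smul_apply, innerSL_apply_apply,
    smul_eq_mul]
  ring

set_option maxHeartbeats 1000000 in
lemma main_aux (x₀ : E) {R lam : ℝ} (hR : 0 < R) (hlam : 0 < lam)
    (u : E → ℝ) {s : Set E} (hs : IsOpen s) (hball : closedBall x₀ R ⊆ s)
    (hu : ContDiffOn ℝ 1 u s) :
    (1 / (16 * lam)) *
        ∫ x in closedBall x₀ R,
          ‖x - x₀‖ ^ 2 * (u x) ^ 2 * Real.exp (-‖x - x₀‖ ^ 2 / (4 * lam)) ≤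
      (((n:ℝ)+1) / 4) *
          (∫ x in closedBall x₀ R, (u x) ^ 2 * Real.exp (-‖x - x₀‖ ^ 2 / (4 * lam))) +
        lam *
          ∫ x in closedBall x₀ R,
            ‖gradient u x‖ ^ 2 * Real.exp (-‖x - x₀‖ ^ 2 / (4 * lam)) := by
  set B : Set E := closedBall x₀ R with hB
  set w : E → ℝ := fun x => Real.exp (-‖x - x₀‖ ^ 2 / (4 * lam)) with hwdef
  have hw0 : ∀ x, 0 < w x := fun x => Real.exp_pos _
  set Φ : E → ℝ := fun x => (u x)^2 * w x with hΦdef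
  set f2 : E → ℝ := fun x => ‖x - x₀‖ ^ 2 * (u x) ^ 2 * w x with hf2def
  set f3 : E → ℝ := fun x => ‖gradient u x‖ ^ 2 * w x with hf3def
  -- smoothness of Φ on s
  have hwCD : ContDiff ℝ 1 w := by
    have h1 : ContDiff ℝ 1 (fun x : E => ‖x - x₀‖^2) :=
      ContDiff.norm_sq (𝕜 := ℝ) (contDiff_id.sub contDiff_const)
    exact Real.contDiff_exp.comp ((h1.neg).div_const _)
  have hΦCD : ContDiffOn ℝ 1 Φ s := by
    apply ContDiffOn.mul _ hwCD.contDiffOn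
    exact (hu.mul hu).congr fun x _ => sq (u x)
  have hud : ∀ x ∈ s, HasFDerivAt u (fderiv ℝ u x) x := fun x hx =>
    ((hu.differentiableOn one_ne_zero).differentiableAt (hs.mem_nhds hx)).hasFDerivAt
  have hufc : ContinuousOn (fderiv ℝ u) s := hu.continuousOn_fderiv_of_isOpen hs le_rfl
  have hΦderiv : ∀ x ∈ s, fderiv ℝ Φ x =
      (2 * u x * w x) • fderiv ℝ u x + (-((u x)^2 * w x) / (2*lam)) • innerSL ℝ (x - x₀) :=
    fun x hx => (phi_hasFDerivAt x₀ hlam (hud x hx)).fderiv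
  have hgradnorm : ∀ x : E, ‖gradient u x‖ = ‖fderiv ℝ u x‖ := fun x =>
    LinearIsometryEquiv.norm_map (InnerProductSpace.toDual ℝ _).symm (fderiv ℝ u x)
  -- divergence inequality
  have key : 0 ≤ ∫ x in B, (((n:ℝ)+1) * Φ x + fderiv ℝ Φ x (x - x₀)) :=
    div_nonneg_ball x₀ hR hs hball hΦCD (fun x => by positivity)
  -- continuity facts
  have hwc : Continuous w := hwCD.continuous
  have huc : ContinuousOn u s := hu.continuousOn
  have hf1c : ContinuousOn Φ s := hΦCD.continuousOn
  have hf2c : ContinuousOn f2 s := by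
    apply ContinuousOn.mul _ hwc.continuousOn
    exact ((continuous_id.sub continuous_const).norm.pow 2).continuousOn.mul (huc.pow 2)
  have hf3c : ContinuousOn f3 s := by
    have h : ContinuousOn (fun x : E => ‖fderiv ℝ u x‖ ^ 2 * w x) s :=
      (hufc.norm.pow 2).mul hwc.continuousOn
    exact h.congr fun x _ => by rw [hf3def]; simp only [hgradnorm x]
  have hfc : ContinuousOn (fderiv ℝ Φ) s := hΦCD.continuousOn_fderiv_of_isOpen hs le_rfl
  -- integrability
  have hcompact : IsCompact B := isCompact_closedBall _ _
  have hf1int : IntegrableOn Φ B := (hf1c.mono hball).integrableOn_compact hcompact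
  have hf2int : IntegrableOn f2 B := (hf2c.mono hball).integrableOn_compact hcompact
  have hf3int : IntegrableOn f3 B := (hf3c.mono hball).integrableOn_compact hcompact
  have hPint : IntegrableOn (fun x => ((n:ℝ)+1) * Φ x + fderiv ℝ Φ x (x - x₀)) B := by
    apply ContinuousOn.integrableOn_compact hcompact
    apply ContinuousOn.mono _ hball
    apply (continuousOn_const.mul hf1c).add
    exact isBoundedBilinearMap_apply.continuous.comp_continuousOn
      (hfc.prodMk ((continuous_id.sub continuous_const).continuousOn))
  have hQint : IntegrableOn
      (fun x => ((n:ℝ)+1) * Φ x + 4*lam * f3 x - (1/(4*lam)) * f2 x) B :=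
    ((hf1int.const_mul _).add (hf3int.const_mul _)).sub (hf2int.const_mul _)
  -- pointwise bound
  have hPQ : ∀ x ∈ B, ((n:ℝ)+1) * Φ x + fderiv ℝ Φ x (x - x₀)
      ≤ ((n:ℝ)+1) * Φ x + 4*lam * f3 x - (1/(4*lam)) * f2 x := by
    intro x hx
    have hxs : x ∈ s := hball hx
    rw [hΦderiv x hxs]
    simp only [ContinuousLinearMap.add_apply, ContinuousLinearMap.coe_smul', Pi.smul_apply,
      innerSL_apply_apply, smul_eq_mul, real_inner_self_eq_norm_sq]
    set r : ℝ := ‖x - x₀‖ with hr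
    set a : ℝ := u x with ha
    set g : ℝ := ‖fderiv ℝ u x‖ with hg
    set W : ℝ := w x with hW
    set D : ℝ := fderiv ℝ u x (x - x₀) with hD
    have hr0 : 0 ≤ r := norm_nonneg _
    have hg0 : 0 ≤ g := norm_nonneg _
    have hW0 : 0 < W := hw0 x
    have hf3x : f3 x = g^2 * W := by rw [hf3def]; simp only [hgradnorm x]; rfl
    have hf2x : f2 x = r^2 * a^2 * W := rfl
    rw [hf3x, hf2x]
    have hDle : a * D ≤ |a| * (g * r) := by
      calc a * D ≤ |a * D| := le_abs_self _
        _ = |a| * |D| := abs_mul _ _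
        _ ≤ |a| * (g * r) := by
            apply mul_le_mul_of_nonneg_left _ (abs_nonneg a)
            calc |D| = ‖D‖ := rfl
              _ ≤ ‖fderiv ℝ u x‖ * ‖x - x₀‖ := ContinuousLinearMap.le_opNorm _ _
    have hAM : 2 * (|a| * (g * r)) ≤ 4*lam*g^2 + (1/(4*lam))*(r^2*a^2) := by
      have e : 4*lam*g^2 + (1/(4*lam))*(r^2*a^2) = (16*lam^2*g^2 + r^2*a^2) / (4*lam) := by
        field_simp; ring
      rw [e, le_div_iff₀ (by positivity)]
      nlinarith [sq_nonneg (r * |a| - 4*lam*g), sq_abs a]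
    have s1 : 2*a*W*D ≤ W * (2 * (|a| * (g * r))) := by
      have := mul_le_mul_of_nonneg_left hDle (by positivity : (0:ℝ) ≤ 2*W)
      nlinarith [this]
    have s2 : W * (2 * (|a| * (g * r))) ≤ W * (4*lam*g^2 + (1/(4*lam))*(r^2*a^2)) :=
      mul_le_mul_of_nonneg_left hAM hW0.le
    have e2 : -(a^2*W) / (2*lam) * r^2 = -(2*((1/(4*lam))*(r^2*a^2)*W)) := by
      field_simp; ring
    have s3 : 2*a*W*D ≤ 4*lam*g^2*W + (1/(4*lam))*(r^2*a^2)*W := by nlinarith [s1, s2]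
    nlinarith [s3, e2]
  -- combine
  have hmono : (∫ x in B, (((n:ℝ)+1) * Φ x + fderiv ℝ Φ x (x - x₀)))
      ≤ ∫ x in B, (((n:ℝ)+1) * Φ x + 4*lam * f3 x - (1/(4*lam)) * f2 x) :=
    setIntegral_mono_on hPint hQint measurableSet_closedBall hPQ
  have hsplit : (∫ x in B, (((n:ℝ)+1) * Φ x + 4*lam * f3 x - (1/(4*lam)) * f2 x))
      = ((n:ℝ)+1) * (∫ x in B, Φ x) + 4*lam * (∫ x in B, f3 x)
        - (1/(4*lam)) * (∫ x in B, f2 x) := by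
    have h1 : IntegrableOn (fun x => ((n:ℝ)+1) * Φ x) B := hf1int.const_mul _
    have h3 : IntegrableOn (fun x => 4*lam * f3 x) B := hf3int.const_mul _
    have h2 : IntegrableOn (fun x => (1/(4*lam)) * f2 x) B := hf2int.const_mul _
    have h13 : IntegrableOn (fun x => ((n:ℝ)+1) * Φ x + 4*lam * f3 x) B := h1.add h3
    rw [integral_sub h13 h2, integral_add h1 h3,
      integral_const_mul, integral_const_mul, integral_const_mul]
  have hkey : 0 ≤ ((n:ℝ)+1) * (∫ x in B, Φ x) + 4*lam * (∫ x in B, f3 x)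
      - (1/(4*lam)) * (∫ x in B, f2 x) := by
    rw [← hsplit]; exact le_trans key hmono
  set I0 := ∫ x in B, Φ x with hI0
  set IG := ∫ x in B, f3 x with hIG
  set I1 := ∫ x in B, f2 x with hI1
  have e : (1/(16*lam)) * I1 = (1/4) * ((1/(4*lam)) * I1) := by
    field_simp
    ring
  rw [e]
  linarith [hkey]

end Aux

/-- Hardy-type uncertainty inequality with Gaussian weight on a ball centered at the
same point as the weight. -/
theorem hardy_uncertainty_gaussian (N : ℕ) (hN : 1 ≤ N) (x₀ : EuclideanSpace ℝ (Fin N))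
    (R lam : ℝ) (hR : 0 < R) (hlam : 0 < lam)
    (u : EuclideanSpace ℝ (Fin N) → ℝ) (s : Set (EuclideanSpace ℝ (Fin N)))
    (hs : IsOpen s) (hball : Metric.closedBall x₀ R ⊆ s) (hu : ContDiffOn ℝ 1 u s) :
    (1 / (16 * lam)) *
        ∫ x in Metric.closedBall x₀ R,
          ‖x - x₀‖ ^ 2 * (u x) ^ 2 * Real.exp (-‖x - x₀‖ ^ 2 / (4 * lam)) ≤
      ((N : ℝ) / 4) *
          (∫ x in Metric.closedBall x₀ R, (u x) ^ 2 * Real.exp (-‖x - x₀‖ ^ 2 / (4 * lam))) +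
        lam *
          ∫ x in Metric.closedBall x₀ R,
            ‖gradient u x‖ ^ 2 * Real.exp (-‖x - x₀‖ ^ 2 / (4 * lam)) := by
  
  obtain ⟨n, rfl⟩ : ∃ n, N = n + 1 := ⟨N - 1, (Nat.succ_pred_eq_of_pos hN).symm⟩
  have h := main_aux x₀ hR hlam u hs hball hu
  push_cast
  exact h
end

section
/- Let T ∈ ℝ, λ > 0, β ≥ 0 and t₀ < T. Let y : ℝ → ℝ be differentiable on [t₀, T] and f : ℝ → ℝ be continuous and nonnegative on [t₀, T], and suppose that y′(s) ≤ (1/(T − s + λ) + 2β) · y(s) + f(s) for every s ∈ [t₀, T]. Then λ · y(T) ≤ e^{2β(T − t₀)} · [ (T − t₀ + λ) · y(t₀) + ∫_{t₀}^{T} (T − s + λ) f(s) ds ]. -/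
open intervalIntegral

/-- Grönwall-type differential inequality used in Step 2 of the proof of the
two-ball and one-cylinder inequality. -/
theorem gronwall_type (T lam β t₀ : ℝ) (hlam : 0 < lam) (hβ : 0 ≤ β) (ht₀ : t₀ < T)
    (y f : ℝ → ℝ)
    (hy : DifferentiableOn ℝ y (Set.Icc t₀ T))
    (hf : ContinuousOn f (Set.Icc t₀ T))
    (hf0 : ∀ s ∈ Set.Icc t₀ T, 0 ≤ f s)
    (hineq : ∀ s ∈ Set.Icc t₀ T,
      derivWithin y (Set.Icc t₀ T) s ≤ (1 / (T - s + lam) + 2 * β) * y s + f s) :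
    lam * y T ≤ Real.exp (2 * β * (T - t₀)) *
      ((T - t₀ + lam) * y t₀ + ∫ s in t₀..T, (T - s + lam) * f s) := by
  have hT : t₀ ≤ T := ht₀.le
  set D := Set.Icc t₀ T with hD
  set h : ℝ → ℝ := fun s => Real.exp (-(2 * β) * s) * ((T - s + lam) * f s) with hh
  set F : ℝ → ℝ := fun s => ∫ τ in t₀..s, h τ with hF
  set g : ℝ → ℝ := fun s => Real.exp (-(2 * β) * s) * ((T - s + lam) * y s) - F s with hg
  have hwf_cont : ContinuousOn (fun s => (T - s + lam) * f s) D := by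
    exact ((continuous_const.sub continuous_id).add continuous_const).continuousOn.mul hf
  have hh_cont : ContinuousOn h D := by
    exact ((Real.continuous_exp.comp (continuous_const.mul continuous_id)).continuousOn).mul
      hwf_cont
  have hh_int : MeasureTheory.IntegrableOn h D := hh_cont.integrableOn_compact isCompact_Icc
  have huIcc : Set.uIcc t₀ T = D := Set.uIcc_of_le hT
  have hF_cont : ContinuousOn F D := by
    rw [← huIcc]
    exact intervalIntegral.continuousOn_primitive_interval (by rwa [huIcc])
  have hy_cont : ContinuousOn y D := hy.continuousOn
  have hg_cont : ContinuousOn g D := by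
    refine ContinuousOn.sub ?_ hF_cont
    exact ((Real.continuous_exp.comp (continuous_const.mul continuous_id)).continuousOn).mul
      ((((continuous_const.sub continuous_id).add continuous_const).continuousOn).mul hy_cont)
  set g' : ℝ → ℝ := fun x =>
    (Real.exp (-(2 * β) * x) * (-(2 * β))) * ((T - x + lam) * y x) +
      Real.exp (-(2 * β) * x) *
        ((-1) * y x + (T - x + lam) * derivWithin y D x) - h x with hg'
  have hderiv : ∀ x ∈ interior D, HasDerivAt g (g' x) x := by
    intro x hx
    rw [hD, interior_Icc] at hx
    have hxD : x ∈ D := Set.Ioo_subset_Icc_self hx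
    have hnhds : D ∈ nhds x := Icc_mem_nhds hx.1 hx.2
    have hyx : HasDerivAt y (derivWithin y D x) x := by
      rw [derivWithin_of_mem_nhds hnhds]
      exact ((hy x hxD).differentiableAt hnhds).hasDerivAt
    have he : HasDerivAt (fun s => Real.exp (-(2 * β) * s))
        (Real.exp (-(2 * β) * x) * (-(2 * β))) x := by
      have : HasDerivAt (fun s : ℝ => -(2 * β) * s) (-(2 * β)) x := by
        simpa using (hasDerivAt_id x).const_mul (-(2 * β))
      exact this.exp
    have hw : HasDerivAt (fun s => (T - s + lam) * y s)
        ((-1) * y x + (T - x + lam) * derivWithin y D x) x := by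
      have h1 : HasDerivAt (fun s : ℝ => T - s + lam) (-1) x := by
        simpa using (((hasDerivAt_id x).const_sub T).add_const lam)
      exact h1.mul hyx
    have hFd : HasDerivAt F (h x) x := by
      refine intervalIntegral.integral_hasDerivAt_right ?_ ?_ ?_
      · apply ContinuousOn.intervalIntegrable
        apply hh_cont.mono
        rw [Set.uIcc_of_le hx.1.le]
        exact Set.Icc_subset_Icc le_rfl hx.2.le
      · exact ⟨D, hnhds, hh_int.aestronglyMeasurable⟩
      · exact hh_cont.continuousAt hnhds
    exact (he.mul hw).sub hFd
  have hnonpos : ∀ x ∈ interior D, g' x ≤ 0 := by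
    intro x hx
    rw [hD, interior_Icc] at hx
    have hxD : x ∈ D := Set.Ioo_subset_Icc_self hx
    have hwpos : 0 < T - x + lam := by have := hx.2; linarith
    have hkey := hineq x hxD
    have hkey2 : (T - x + lam) * derivWithin y D x ≤
        (1 + 2 * β * (T - x + lam)) * y x + (T - x + lam) * f x := by
      have := mul_le_mul_of_nonneg_left hkey hwpos.le
      calc (T - x + lam) * derivWithin y D x
          ≤ (T - x + lam) * ((1 / (T - x + lam) + 2 * β) * y x + f x) := this
        _ = (1 + 2 * β * (T - x + lam)) * y x + (T - x + lam) * f x := by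
            field_simp
    have hexp : 0 < Real.exp (-(2 * β) * x) := Real.exp_pos _
    rw [hg', hh]
    simp only
    nlinarith [hexp, mul_le_mul_of_nonneg_left hkey2 hexp.le]
  have hanti : AntitoneOn g D :=
    antitoneOn_of_hasDerivWithinAt_nonpos (convex_Icc t₀ T) hg_cont
      (fun x hx => (hderiv x hx).hasDerivWithinAt) hnonpos
  have hgT : g T ≤ g t₀ := hanti (Set.left_mem_Icc.2 hT) (Set.right_mem_Icc.2 hT) hT
  have hFt₀ : F t₀ = 0 := intervalIntegral.integral_same
  have hgineq : Real.exp (-(2 * β) * T) * (lam * y T) - F T ≤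
      Real.exp (-(2 * β) * t₀) * ((T - t₀ + lam) * y t₀) := by
    have : g T = Real.exp (-(2 * β) * T) * ((T - T + lam) * y T) - F T := rfl
    have h2 : g t₀ = Real.exp (-(2 * β) * t₀) * ((T - t₀ + lam) * y t₀) - F t₀ := rfl
    rw [this, h2, hFt₀, sub_zero] at hgT
    have : T - T + lam = lam := by ring
    rw [this] at hgT
    exact hgT
  -- multiply by exp (2βT)
  have hE : 0 < Real.exp (2 * β * T) := Real.exp_pos _
  have hstep : lam * y T ≤
      Real.exp (2 * β * (T - t₀)) * ((T - t₀ + lam) * y t₀) +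
        Real.exp (2 * β * T) * F T := by
    have := mul_le_mul_of_nonneg_left hgineq hE.le
    have e1 : Real.exp (2 * β * T) * (Real.exp (-(2 * β) * T) * (lam * y T)) = lam * y T := by
      rw [← mul_assoc, ← Real.exp_add]; ring_nf; simp
    have e2 : Real.exp (2 * β * T) * (Real.exp (-(2 * β) * t₀) * ((T - t₀ + lam) * y t₀)) =
        Real.exp (2 * β * (T - t₀)) * ((T - t₀ + lam) * y t₀) := by
      rw [← mul_assoc, ← Real.exp_add]; ring_nf
    nlinarith [this]
  -- bound exp(2βT) * F T
  have hbd : Real.exp (2 * β * T) * F T ≤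
      Real.exp (2 * β * (T - t₀)) * ∫ s in t₀..T, (T - s + lam) * f s := by
    rw [hF, ← intervalIntegral.integral_const_mul, ← intervalIntegral.integral_const_mul]
    apply intervalIntegral.integral_mono_on hT
    · apply ContinuousOn.intervalIntegrable
      rw [huIcc]
      exact continuousOn_const.mul hh_cont
    · apply ContinuousOn.intervalIntegrable
      rw [huIcc]
      exact continuousOn_const.mul hwf_cont
    · intro s hs
      have hwf0 : 0 ≤ (T - s + lam) * f s := by
        have := hf0 s hs
        have : 0 ≤ f s := this
        have hw : 0 < T - s + lam := by have := hs.2; linarith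
        positivity
      rw [hh]
      simp only
      rw [← mul_assoc, ← Real.exp_add]
      apply mul_le_mul_of_nonneg_right _ hwf0
      apply Real.exp_le_exp.2
      have := hs.1
      nlinarith
  calc lam * y T ≤ Real.exp (2 * β * (T - t₀)) * ((T - t₀ + lam) * y t₀) +
        Real.exp (2 * β * T) * F T := hstep
    _ ≤ Real.exp (2 * β * (T - t₀)) * ((T - t₀ + lam) * y t₀) +
        Real.exp (2 * β * (T - t₀)) * ∫ s in t₀..T, (T - s + lam) * f s := by linarith
    _ = Real.exp (2 * β * (T - t₀)) *
        ((T - t₀ + lam) * y t₀ + ∫ s in t₀..T, (T - s + lam) * f s) := by ring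
end

section
/- Let N ≥ 1, x₀ ∈ ℝ^N, λ > 0, R₀ > 0 and 0 < r ≤ R₀, and let u : ℝ^N → ℝ be continuously differentiable on a neighborhood of the closed ball B_{R₀}(x₀). Then ∫_{B_{R₀}(x₀)} u(x)² e^{−‖x−x₀‖²/(4λ)} dx ≤ (16λ/r²) · [ (N/4) ∫_{B_{R₀}(x₀)} u(x)² e^{−‖x−x₀‖²/(4λ)} dx + λ ∫_{B_{R₀}(x₀)} ‖∇u(x)‖² e^{−‖x−x₀‖²/(4λ)} dx ] + ∫_{B_r(x₀)} u(x)² e^{−‖x−x₀‖²/(4λ)} dx. -/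
open MeasureTheory


open Set Function Metric MeasureTheory intervalIntegral
local notation "dim" => Module.finrank ℝ

variable {E : Type*} [NormedAddCommGroup E] [NormedSpace ℝ E]
  [MeasurableSpace E] [Nontrivial E] (μ : Measure E) [FiniteDimensional ℝ E]
  [BorelSpace E] [μ.IsAddHaarMeasure]

lemma integral_volumeIoiPow (n : ℕ) (h : ℝ → ℝ) :
    (∫ t : Ioi (0:ℝ), h t.1 ∂(Measure.volumeIoiPow n)) = ∫ t in Ioi (0:ℝ), t ^ n * h t := by
  simp only [Measure.volumeIoiPow, ENNReal.ofReal]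
  rw [integral_withDensity_eq_integral_smul
    ((measurable_subtype_coe.pow_const _).real_toNNReal),
    integral_subtype_comap measurableSet_Ioi fun a ↦ Real.toNNReal (a ^ n) • h a,
    setIntegral_congr_fun measurableSet_Ioi fun x hx ↦ ?_]
  rw [NNReal.smul_def, Real.coe_toNNReal _ (pow_nonneg hx.out.le _), smul_eq_mul]

lemma integral_polar (G : E → ℝ) (hG : Integrable G μ) :
    ∫ x, G x ∂μ
      = ∫ ω : sphere (0:E) 1,
          (∫ t in Ioi (0:ℝ), t ^ (dim E - 1) * G (t • (ω:E))) ∂μ.toSphere := by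
  have hGc : Integrable (fun x : ({(0:E)}ᶜ : Set E) => G x.1) (μ.comap (↑)) := by
    have := (MeasurableEmbedding.subtype_coe
      (measurableSet_singleton (0:E)).compl).integrableOn_iff_comap
      (f := G) (μ := μ) (s := {(0:E)}ᶜ) (by rw [Subtype.range_coe])
    have h2 : IntegrableOn G {(0:E)}ᶜ μ := hG.integrableOn
    rw [this] at h2
    simpa [IntegrableOn, Function.comp_def] using h2
  have key : ∀ x : ({(0:E)}ᶜ : Set E),
      G x.1 = (fun p : sphere (0:E) 1 × Ioi (0:ℝ) => G (p.2.1 • (p.1:E)))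
        (homeomorphUnitSphereProd E x) := by
    intro x
    simp only [homeomorphUnitSphereProd_apply_fst_coe, homeomorphUnitSphereProd_apply_snd_coe]
    rw [smul_smul, mul_inv_cancel₀ (norm_ne_zero_iff.2 x.2), one_smul]
  have hint : Integrable (fun p : sphere (0:E) 1 × Ioi (0:ℝ) => G (p.2.1 • (p.1:E)))
      (μ.toSphere.prod (.volumeIoiPow (dim E - 1))) := by
    rw [← (μ.measurePreserving_homeomorphUnitSphereProd.integrable_comp_emb
      (Homeomorph.measurableEmbedding _))]
    exact hGc.congr (Filter.Eventually.of_forall fun x => (key x))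
  calc
    ∫ x, G x ∂μ = ∫ x : ({(0:E)}ᶜ : Set E), G x.1 ∂(μ.comap (↑)) := by
      rw [integral_subtype_comap (measurableSet_singleton _).compl fun x ↦ G x,
        restrict_compl_singleton]
    _ = ∫ p : sphere (0:E) 1 × Ioi (0:ℝ), G (p.2.1 • (p.1:E))
          ∂(μ.toSphere.prod (.volumeIoiPow (dim E - 1))) := by
      rw [← μ.measurePreserving_homeomorphUnitSphereProd.integral_comp
        (Homeomorph.measurableEmbedding _) (fun p : sphere (0:E) 1 × Ioi (0:ℝ) =>
          G (p.2.1 • (p.1:E)))]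
      exact integral_congr_ae (Filter.Eventually.of_forall fun x => key x)
    _ = ∫ ω : sphere (0:E) 1, (∫ t : Ioi (0:ℝ), G (t.1 • (ω:E))
          ∂(Measure.volumeIoiPow (dim E - 1))) ∂μ.toSphere := integral_prod _ hint
    _ = _ := by
      refine integral_congr_ae (Filter.Eventually.of_forall fun ω => ?_)
      exact integral_volumeIoiPow _ (fun t => G (t • (ω:E)))

section Div

variable {N : ℕ}

local notation "E'" => EuclideanSpace ℝ (Fin N)

lemma grad_inner (v : E' → ℝ) (x y : E') :
    (inner ℝ (gradient v x) y : ℝ) = fderiv ℝ v x y :=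
  InnerProductSpace.toDual_symm_apply

lemma divergence_ineq (hN : 1 ≤ N) (lam R : ℝ) (hlam : 0 < lam) (hR : 0 < R)
    (v : E' → ℝ) (s : Set E') (hs : IsOpen s) (hball : closedBall 0 R ⊆ s)
    (hv : ContDiffOn ℝ 1 v s) :
    0 ≤ ∫ x in closedBall (0:E') R,
        ((N:ℝ) * v x ^ 2 + 2 * v x * (inner ℝ x (gradient v x) : ℝ)
          - v x ^ 2 * ‖x‖ ^ 2 / (2 * lam)) * Real.exp (-‖x‖ ^ 2 / (4 * lam)) := by
  haveI : Nonempty (Fin N) := Fin.pos_iff_nonempty.mp (by omega)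
  haveI : Nontrivial E' := inferInstanceAs (Nontrivial (PiLp 2 fun _ : Fin N => ℝ))
  set P : E' → ℝ := fun x =>
    ((N:ℝ) * v x ^ 2 + 2 * v x * (inner ℝ x (gradient v x) : ℝ)
      - v x ^ 2 * ‖x‖ ^ 2 / (2 * lam)) * Real.exp (-‖x‖ ^ 2 / (4 * lam)) with hPdef
  -- continuity of P on s
  have hgc : ContinuousOn (fun x => gradient v x) s := by
    have h1 : ContinuousOn (fderiv ℝ v) s := hv.continuousOn_fderiv_of_isOpen hs le_rfl
    exact (InnerProductSpace.toDual ℝ E').symm.continuous.comp_continuousOn h1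
  have hvc : ContinuousOn v s := hv.continuousOn
  have hPc : ContinuousOn P s := by
    apply ContinuousOn.mul
    · apply ContinuousOn.sub
      · apply ContinuousOn.add
        · exact (continuousOn_const.mul ((hvc.pow 2)))
        · exact (continuousOn_const.mul hvc).mul (continuousOn_id.inner hgc)
      · exact (((hvc.pow 2)).mul ((continuous_norm.pow 2).continuousOn)).div_const _
    · exact (Real.continuous_exp.comp (by fun_prop)).continuousOn
  have hPint : IntegrableOn P (closedBall (0:E') R) :=
    (hPc.mono hball).integrableOn_compact (isCompact_closedBall _ _)
  set G : E' → ℝ := indicator (closedBall (0:E') R) P with hGdef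
  have hGint : Integrable G := (integrable_indicator_iff measurableSet_closedBall).2 hPint
  have hpolar := integral_polar (volume : Measure E') G hGint
  rw [← MeasureTheory.integral_indicator measurableSet_closedBall, ← hGdef, hpolar]
  refine integral_nonneg fun ω => ?_
  -- inner ray integral
  have hω : ‖(ω:E')‖ = 1 := mem_sphere_zero_iff_norm.mp ω.2
  have hdim : dim E' - 1 = N - 1 := by rw [finrank_euclideanSpace_fin]
  rw [hdim]
  set F : ℝ → ℝ := fun t => t ^ N * (v (t • (ω:E'))) ^ 2 * Real.exp (-t ^ 2 / (4 * lam))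
    with hFdef
  set f' : ℝ → ℝ := fun t => t ^ (N - 1) * P (t • (ω:E')) with hf'def
  have hmem : ∀ t ∈ Icc (0:ℝ) R, t • (ω:E') ∈ closedBall (0:E') R := by
    intro t ht
    simp only [mem_closedBall, dist_zero_right, norm_smul, hω, mul_one, Real.norm_eq_abs]
    rw [abs_of_nonneg ht.1]; exact ht.2
  have hderiv : ∀ t ∈ uIcc (0:ℝ) R, HasDerivAt F (f' t) t := by
    intro t ht
    rw [uIcc_of_le hR.le] at ht
    have hd : DifferentiableAt ℝ v (t • (ω:E')) :=
      (hv.differentiableOn one_ne_zero).differentiableAt (hs.mem_nhds (hball (hmem t ht)))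
    have hray : HasDerivAt (fun t : ℝ => t • (ω:E')) (ω:E') t := by
      simpa using (hasDerivAt_id t).smul_const (ω:E')
    have hg : HasDerivAt (fun t => v (t • (ω:E'))) (fderiv ℝ v (t • (ω:E')) (ω:E')) t :=
      hd.hasFDerivAt.comp_hasDerivAt t hray
    set dv := fderiv ℝ v (t • (ω:E')) (ω:E') with hdv
    have hg2 : HasDerivAt (fun t => (v (t • (ω:E'))) ^ 2) (2 * v (t • (ω:E')) * dv) t := by
      simpa using hg.fun_pow 2
    have hq : HasDerivAt (fun t : ℝ => -t ^ 2 / (4 * lam)) (-(2 * t) / (4 * lam)) t := by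
      simpa using ((hasDerivAt_pow 2 t).neg.div_const (4 * lam))
    have hexp : HasDerivAt (fun t : ℝ => Real.exp (-t ^ 2 / (4 * lam)))
        (Real.exp (-t ^ 2 / (4 * lam)) * (-(2 * t) / (4 * lam))) t := hq.exp
    have hF : HasDerivAt F
        ((((N:ℝ) * t ^ (N - 1)) * (v (t • (ω:E'))) ^ 2
            + t ^ N * (2 * v (t • (ω:E')) * dv)) * Real.exp (-t ^ 2 / (4 * lam))
          + t ^ N * (v (t • (ω:E'))) ^ 2
            * (Real.exp (-t ^ 2 / (4 * lam)) * (-(2 * t) / (4 * lam)))) t :=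
      ((hasDerivAt_pow N t).mul hg2).mul hexp
    convert hF using 1
    have hinner : (inner ℝ (t • (ω:E')) (gradient v (t • (ω:E'))) : ℝ) = t * dv := by
      rw [real_inner_smul_left, real_inner_comm, grad_inner]
    have hnorm : ‖t • (ω:E')‖ ^ 2 = t ^ 2 := by
      rw [norm_smul, hω, mul_one, Real.norm_eq_abs, sq_abs]
    obtain ⟨m, rfl⟩ : ∃ m, N = m + 1 := ⟨N - 1, (Nat.succ_pred_eq_of_pos hN).symm⟩
    simp only [hf'def, hPdef, hinner, hnorm, Nat.add_sub_cancel]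
    have h4 : (4:ℝ) * lam ≠ 0 := by positivity
    push_cast
    field_simp
    ring
  have hmaps : MapsTo (fun t : ℝ => t • (ω:E')) (uIcc (0:ℝ) R) s := by
    intro t ht
    rw [uIcc_of_le hR.le] at ht
    exact hball (hmem t ht)
  have hf'cont : ContinuousOn f' (uIcc (0:ℝ) R) := by
    apply ContinuousOn.mul (continuousOn_pow _)
    exact hPc.comp (Continuous.continuousOn (by fun_prop)) hmaps
  have hFTC : ∫ t in (0:ℝ)..R, f' t = F R - F 0 :=
    intervalIntegral.integral_eq_sub_of_hasDerivAt hderiv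
      (hf'cont.intervalIntegrable)
  have hinteq : (∫ t in Ioi (0:ℝ), t ^ (N - 1) * G (t • (ω:E')))
      = ∫ t in (0:ℝ)..R, f' t := by
    rw [intervalIntegral.integral_of_le hR.le]
    rw [setIntegral_congr_fun measurableSet_Ioi
      (g := indicator (Ioc (0:ℝ) R) f') ?_]
    · rw [setIntegral_indicator measurableSet_Ioc,
        Set.inter_eq_right.mpr Ioc_subset_Ioi_self]
    · intro t ht
      by_cases htR : t ≤ R
      · have hm : t • (ω:E') ∈ closedBall (0:E') R := hmem t ⟨le_of_lt ht, htR⟩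
        simp only [hGdef]
        rw [indicator_of_mem hm, indicator_of_mem (mem_Ioc.mpr ⟨ht, htR⟩)]
      · have hm : t • (ω:E') ∉ closedBall (0:E') R := by
          simp only [mem_closedBall, dist_zero_right, norm_smul, hω, mul_one,
            Real.norm_eq_abs, abs_of_nonneg (le_of_lt (show (0:ℝ) < t from ht))]
          exact htR
        simp only [hGdef]
        rw [indicator_of_notMem hm, indicator_of_notMem (by simp [htR]), mul_zero]
  rw [hinteq, hFTC]
  have hF0 : F 0 = 0 := by
    simp [hFdef, zero_pow (by omega : N ≠ 0)]
  rw [hF0, sub_zero]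
  have : 0 ≤ F R := by
    simp only [hFdef]
    positivity
  exact this


lemma hardy_ball (hN : 1 ≤ N) (lam R : ℝ) (hlam : 0 < lam) (hR : 0 < R)
    (v : E' → ℝ) (s : Set E') (hs : IsOpen s) (hball : closedBall 0 R ⊆ s)
    (hv : ContDiffOn ℝ 1 v s) :
    ∫ x in closedBall (0:E') R,
        v x ^ 2 * (‖x‖ ^ 2 / (4 * lam)) * Real.exp (-‖x‖ ^ 2 / (4 * lam))
      ≤ (N:ℝ) * (∫ x in closedBall (0:E') R, v x ^ 2 * Real.exp (-‖x‖ ^ 2 / (4 * lam)))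
        + 4 * lam * ∫ x in closedBall (0:E') R,
            ‖gradient v x‖ ^ 2 * Real.exp (-‖x‖ ^ 2 / (4 * lam)) := by
  have hgc : ContinuousOn (fun x => gradient v x) s := by
    have h1 : ContinuousOn (fderiv ℝ v) s := hv.continuousOn_fderiv_of_isOpen hs le_rfl
    exact (InnerProductSpace.toDual ℝ E').symm.continuous.comp_continuousOn h1
  have hvc : ContinuousOn v s := hv.continuousOn
  have hwc : ContinuousOn (fun x : E' => Real.exp (-‖x‖ ^ 2 / (4 * lam))) s :=
    (Real.continuous_exp.comp (by fun_prop)).continuousOn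
  have hcpt := isCompact_closedBall (0:E') R
  have hf1c : ContinuousOn (fun x => v x ^ 2 * Real.exp (-‖x‖ ^ 2 / (4 * lam))) s :=
    (hvc.pow 2).mul hwc
  have hf2c : ContinuousOn
      (fun x => v x ^ 2 * (‖x‖ ^ 2 / (4 * lam)) * Real.exp (-‖x‖ ^ 2 / (4 * lam))) s :=
    ((hvc.pow 2).mul (by fun_prop)).mul hwc
  have hf3c : ContinuousOn
      (fun x => ‖gradient v x‖ ^ 2 * Real.exp (-‖x‖ ^ 2 / (4 * lam))) s :=
    ((hgc.norm.pow 2)).mul hwc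
  have hf4c : ContinuousOn
      (fun x => 2 * v x * (inner ℝ x (gradient v x) : ℝ) * Real.exp (-‖x‖ ^ 2 / (4 * lam))) s :=
    ((continuousOn_const.mul hvc).mul (continuousOn_id.inner hgc)).mul hwc
  have hA := ((hf1c.mono hball).integrableOn_compact (μ := volume) hcpt)
  have hB := ((hf2c.mono hball).integrableOn_compact (μ := volume) hcpt)
  have hC := ((hf3c.mono hball).integrableOn_compact (μ := volume) hcpt)
  have hD := ((hf4c.mono hball).integrableOn_compact (μ := volume) hcpt)
  have hdiv := divergence_ineq hN lam R hlam hR v s hs hball hv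
  -- rewrite the divergence integrand as a combination
  have hsplit : ∀ x : E',
      ((N:ℝ) * v x ^ 2 + 2 * v x * (inner ℝ x (gradient v x) : ℝ)
          - v x ^ 2 * ‖x‖ ^ 2 / (2 * lam)) * Real.exp (-‖x‖ ^ 2 / (4 * lam))
        = (N:ℝ) * (v x ^ 2 * Real.exp (-‖x‖ ^ 2 / (4 * lam)))
          + 2 * v x * (inner ℝ x (gradient v x) : ℝ) * Real.exp (-‖x‖ ^ 2 / (4 * lam))
          - 2 * (v x ^ 2 * (‖x‖ ^ 2 / (4 * lam)) * Real.exp (-‖x‖ ^ 2 / (4 * lam))) := by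
    intro x
    have : (4:ℝ) * lam ≠ 0 := by positivity
    have : (2:ℝ) * lam ≠ 0 := by positivity
    field_simp
    ring
  rw [show (fun x : E' => ((N:ℝ) * v x ^ 2 + 2 * v x * (inner ℝ x (gradient v x) : ℝ)
      - v x ^ 2 * ‖x‖ ^ 2 / (2 * lam)) * Real.exp (-‖x‖ ^ 2 / (4 * lam)))
      = fun x : E' => (N:ℝ) * (v x ^ 2 * Real.exp (-‖x‖ ^ 2 / (4 * lam)))
          + 2 * v x * (inner ℝ x (gradient v x) : ℝ) * Real.exp (-‖x‖ ^ 2 / (4 * lam))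
          - 2 * (v x ^ 2 * (‖x‖ ^ 2 / (4 * lam)) * Real.exp (-‖x‖ ^ 2 / (4 * lam)))
      from funext hsplit] at hdiv
  have hND : Integrable (fun x => (N:ℝ) * (v x ^ 2 * Real.exp (-‖x‖ ^ 2 / (4 * lam)))
      + 2 * v x * (inner ℝ x (gradient v x) : ℝ) * Real.exp (-‖x‖ ^ 2 / (4 * lam)))
      (volume.restrict (closedBall (0:E') R)) := (hA.const_mul _).add hD
  have h2B : Integrable (fun x =>
      2 * (v x ^ 2 * (‖x‖ ^ 2 / (4 * lam)) * Real.exp (-‖x‖ ^ 2 / (4 * lam))))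
      (volume.restrict (closedBall (0:E') R)) := hB.const_mul 2
  have hNA : Integrable (fun x => (N:ℝ) * (v x ^ 2 * Real.exp (-‖x‖ ^ 2 / (4 * lam))))
      (volume.restrict (closedBall (0:E') R)) := hA.const_mul _
  rw [integral_sub hND h2B, integral_add hNA hD, MeasureTheory.integral_const_mul, MeasureTheory.integral_const_mul] at hdiv
  -- pointwise bound for the cross term
  have hpt : ∀ x ∈ closedBall (0:E') R,
      2 * v x * (inner ℝ x (gradient v x) : ℝ) * Real.exp (-‖x‖ ^ 2 / (4 * lam))
        ≤ v x ^ 2 * (‖x‖ ^ 2 / (4 * lam)) * Real.exp (-‖x‖ ^ 2 / (4 * lam))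
          + 4 * lam * (‖gradient v x‖ ^ 2 * Real.exp (-‖x‖ ^ 2 / (4 * lam))) := by
    intro x _
    have hw : (0:ℝ) < Real.exp (-‖x‖ ^ 2 / (4 * lam)) := Real.exp_pos _
    rw [show v x ^ 2 * (‖x‖ ^ 2 / (4 * lam)) * Real.exp (-‖x‖ ^ 2 / (4 * lam))
          + 4 * lam * (‖gradient v x‖ ^ 2 * Real.exp (-‖x‖ ^ 2 / (4 * lam)))
        = (v x ^ 2 * (‖x‖ ^ 2 / (4 * lam)) + 4 * lam * ‖gradient v x‖ ^ 2)
            * Real.exp (-‖x‖ ^ 2 / (4 * lam)) from by ring]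
    apply mul_le_mul_of_nonneg_right _ hw.le
    have h1 : 2 * v x * (inner ℝ x (gradient v x) : ℝ)
        ≤ 2 * (|v x| * ‖x‖) * ‖gradient v x‖ := by
      have := abs_real_inner_le_norm x (gradient v x)
      calc 2 * v x * (inner ℝ x (gradient v x) : ℝ)
          ≤ |2 * v x * (inner ℝ x (gradient v x) : ℝ)| := le_abs_self _
        _ = 2 * |v x| * |(inner ℝ x (gradient v x) : ℝ)| := by
            rw [abs_mul, abs_mul, abs_two]
        _ ≤ 2 * |v x| * (‖x‖ * ‖gradient v x‖) := by
            apply mul_le_mul_of_nonneg_left this (by positivity)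
        _ = 2 * (|v x| * ‖x‖) * ‖gradient v x‖ := by ring
    refine h1.trans ?_
    set c := Real.sqrt lam with hc
    have hc0 : 0 < c := Real.sqrt_pos.mpr hlam
    have hc2 : c ^ 2 = lam := Real.sq_sqrt hlam.le
    have key := two_mul_le_add_sq (|v x| * ‖x‖ / (2 * c)) (2 * c * ‖gradient v x‖)
    calc 2 * (|v x| * ‖x‖) * ‖gradient v x‖
        = 2 * (|v x| * ‖x‖ / (2 * c)) * (2 * c * ‖gradient v x‖) := by
          field_simp
        _ ≤ (|v x| * ‖x‖ / (2 * c)) ^ 2 + (2 * c * ‖gradient v x‖) ^ 2 := key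
        _ = v x ^ 2 * (‖x‖ ^ 2 / (4 * lam)) + 4 * lam * ‖gradient v x‖ ^ 2 := by
          rw [div_pow, mul_pow, sq_abs, ← hc2]
          field_simp
          ring
  have hDle : (∫ x in closedBall (0:E') R,
        2 * v x * (inner ℝ x (gradient v x) : ℝ) * Real.exp (-‖x‖ ^ 2 / (4 * lam)))
      ≤ (∫ x in closedBall (0:E') R,
          v x ^ 2 * (‖x‖ ^ 2 / (4 * lam)) * Real.exp (-‖x‖ ^ 2 / (4 * lam)))
        + 4 * lam * ∫ x in closedBall (0:E') R,
            ‖gradient v x‖ ^ 2 * Real.exp (-‖x‖ ^ 2 / (4 * lam)) := by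
    rw [← MeasureTheory.integral_const_mul, ← integral_add hB (hC.const_mul _)]
    exact setIntegral_mono_on hD (hB.add (hC.const_mul _)) measurableSet_closedBall hpt
  linarith

lemma centered_splitting (hN : 1 ≤ N) (lam R₀ r : ℝ) (hlam : 0 < lam) (hR₀ : 0 < R₀)
    (hr : 0 < r) (hrR : r ≤ R₀)
    (v : E' → ℝ) (s : Set E') (hs : IsOpen s) (hball : closedBall 0 R₀ ⊆ s)
    (hv : ContDiffOn ℝ 1 v s) :
    (∫ x in closedBall (0:E') R₀, v x ^ 2 * Real.exp (-‖x‖ ^ 2 / (4 * lam))) ≤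
      (16 * lam / r ^ 2) *
          (((N : ℝ) / 4) *
              (∫ x in closedBall (0:E') R₀, v x ^ 2 * Real.exp (-‖x‖ ^ 2 / (4 * lam))) +
            lam * ∫ x in closedBall (0:E') R₀,
                ‖gradient v x‖ ^ 2 * Real.exp (-‖x‖ ^ 2 / (4 * lam))) +
        ∫ x in closedBall (0:E') r, v x ^ 2 * Real.exp (-‖x‖ ^ 2 / (4 * lam)) := by
  have hgc : ContinuousOn (fun x => gradient v x) s := by
    have h1 : ContinuousOn (fderiv ℝ v) s := hv.continuousOn_fderiv_of_isOpen hs le_rfl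
    exact (InnerProductSpace.toDual ℝ E').symm.continuous.comp_continuousOn h1
  have hvc : ContinuousOn v s := hv.continuousOn
  have hwc : ContinuousOn (fun x : E' => Real.exp (-‖x‖ ^ 2 / (4 * lam))) s :=
    (Real.continuous_exp.comp (by fun_prop)).continuousOn
  have hcpt := isCompact_closedBall (0:E') R₀
  have hf1c : ContinuousOn (fun x => v x ^ 2 * Real.exp (-‖x‖ ^ 2 / (4 * lam))) s :=
    (hvc.pow 2).mul hwc
  have hf2c : ContinuousOn
      (fun x => v x ^ 2 * (‖x‖ ^ 2 / (4 * lam)) * Real.exp (-‖x‖ ^ 2 / (4 * lam))) s :=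
    ((hvc.pow 2).mul (by fun_prop)).mul hwc
  have hqc : ContinuousOn
      (fun x => v x ^ 2 * (‖x‖ ^ 2 / r ^ 2) * Real.exp (-‖x‖ ^ 2 / (4 * lam))) s :=
    ((hvc.pow 2).mul (by fun_prop)).mul hwc
  have hA := ((hf1c.mono hball).integrableOn_compact (μ := volume) hcpt)
  have hB := ((hf2c.mono hball).integrableOn_compact (μ := volume) hcpt)
  have hQ := ((hqc.mono hball).integrableOn_compact (μ := volume) hcpt)
  have hsub : closedBall (0:E') r ⊆ closedBall (0:E') R₀ := closedBall_subset_closedBall hrR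
  -- split the big ball
  have hsplit : (∫ x in closedBall (0:E') R₀, v x ^ 2 * Real.exp (-‖x‖ ^ 2 / (4 * lam)))
      = (∫ x in closedBall (0:E') R₀ \ closedBall (0:E') r,
          v x ^ 2 * Real.exp (-‖x‖ ^ 2 / (4 * lam)))
        + ∫ x in closedBall (0:E') r, v x ^ 2 * Real.exp (-‖x‖ ^ 2 / (4 * lam)) := by
    rw [← setIntegral_union disjoint_sdiff_left measurableSet_closedBall
      (hA.mono_set diff_subset) (hA.mono_set hsub), diff_union_of_subset hsub]
  -- annulus bound
  have hann : (∫ x in closedBall (0:E') R₀ \ closedBall (0:E') r,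
        v x ^ 2 * Real.exp (-‖x‖ ^ 2 / (4 * lam)))
      ≤ ∫ x in closedBall (0:E') R₀ \ closedBall (0:E') r,
          v x ^ 2 * (‖x‖ ^ 2 / r ^ 2) * Real.exp (-‖x‖ ^ 2 / (4 * lam)) := by
    refine setIntegral_mono_on (hA.mono_set diff_subset) (hQ.mono_set diff_subset)
      (measurableSet_closedBall.diff measurableSet_closedBall) ?_
    intro x hx
    have hxr : r ≤ ‖x‖ := by
      have := hx.2
      simp only [mem_closedBall, dist_zero_right, not_le] at this
      exact this.le
    have h1 : (1:ℝ) ≤ ‖x‖ ^ 2 / r ^ 2 := by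
      rw [le_div_iff₀ (by positivity), one_mul]
      exact pow_le_pow_left₀ hr.le hxr 2
    nlinarith [sq_nonneg (v x), Real.exp_pos (-‖x‖ ^ 2 / (4 * lam)), sq_nonneg (v x) ,
      mul_nonneg (sq_nonneg (v x)) (Real.exp_pos (-‖x‖ ^ 2 / (4 * lam))).le]
  have hmono : (∫ x in closedBall (0:E') R₀ \ closedBall (0:E') r,
        v x ^ 2 * (‖x‖ ^ 2 / r ^ 2) * Real.exp (-‖x‖ ^ 2 / (4 * lam)))
      ≤ ∫ x in closedBall (0:E') R₀,
          v x ^ 2 * (‖x‖ ^ 2 / r ^ 2) * Real.exp (-‖x‖ ^ 2 / (4 * lam)) := by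
    refine setIntegral_mono_set hQ ?_ (HasSubset.Subset.eventuallyLE diff_subset)
    filter_upwards with x
    positivity
  have hconv : (∫ x in closedBall (0:E') R₀,
        v x ^ 2 * (‖x‖ ^ 2 / r ^ 2) * Real.exp (-‖x‖ ^ 2 / (4 * lam)))
      = (4 * lam / r ^ 2) * ∫ x in closedBall (0:E') R₀,
          v x ^ 2 * (‖x‖ ^ 2 / (4 * lam)) * Real.exp (-‖x‖ ^ 2 / (4 * lam)) := by
    rw [← MeasureTheory.integral_const_mul]
    refine setIntegral_congr_fun measurableSet_closedBall fun x _ => ?_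
    have h1 : (4:ℝ) * lam ≠ 0 := by positivity
    have h2 : r ^ 2 ≠ 0 := by positivity
    field_simp
  have hhardy := hardy_ball hN lam R₀ hlam hR₀ v s hs hball hv
  have hk : (0:ℝ) ≤ 4 * lam / r ^ 2 := by positivity
  have heq : (16 * lam / r ^ 2) *
          (((N : ℝ) / 4) *
              (∫ x in closedBall (0:E') R₀, v x ^ 2 * Real.exp (-‖x‖ ^ 2 / (4 * lam))) +
            lam * ∫ x in closedBall (0:E') R₀,
                ‖gradient v x‖ ^ 2 * Real.exp (-‖x‖ ^ 2 / (4 * lam)))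
      = (4 * lam / r ^ 2) *
          ((N : ℝ) * (∫ x in closedBall (0:E') R₀, v x ^ 2 * Real.exp (-‖x‖ ^ 2 / (4 * lam)))
            + 4 * lam * ∫ x in closedBall (0:E') R₀,
                ‖gradient v x‖ ^ 2 * Real.exp (-‖x‖ ^ 2 / (4 * lam))) := by
    ring
  rw [heq]
  have := mul_le_mul_of_nonneg_left hhardy hk
  linarith

end Div


/-- Two-ball weighted splitting inequality (Step 3 in the proof of the two-ball and
one-cylinder inequality). -/
theorem two_ball_splitting (N : ℕ) (hN : 1 ≤ N) (x₀ : EuclideanSpace ℝ (Fin N))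
    (lam R₀ r : ℝ) (hlam : 0 < lam) (hR₀ : 0 < R₀) (hr : 0 < r) (hrR : r ≤ R₀)
    (u : EuclideanSpace ℝ (Fin N) → ℝ) (s : Set (EuclideanSpace ℝ (Fin N)))
    (hs : IsOpen s) (hball : Metric.closedBall x₀ R₀ ⊆ s) (hu : ContDiffOn ℝ 1 u s) :
    (∫ x in Metric.closedBall x₀ R₀, (u x) ^ 2 * Real.exp (-‖x - x₀‖ ^ 2 / (4 * lam))) ≤
      (16 * lam / r ^ 2) *
          (((N : ℝ) / 4) *
              (∫ x in Metric.closedBall x₀ R₀,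
                (u x) ^ 2 * Real.exp (-‖x - x₀‖ ^ 2 / (4 * lam))) +
            lam *
              ∫ x in Metric.closedBall x₀ R₀,
                ‖gradient u x‖ ^ 2 * Real.exp (-‖x - x₀‖ ^ 2 / (4 * lam))) +
        ∫ x in Metric.closedBall x₀ r, (u x) ^ 2 * Real.exp (-‖x - x₀‖ ^ 2 / (4 * lam)) := by
  set T : EuclideanSpace ℝ (Fin N) → EuclideanSpace ℝ (Fin N) := fun y => y + x₀ with hTdef
  have hT : MeasurePreserving T volume volume := measurePreserving_add_right volume x₀
  have hTemb : MeasurableEmbedding T := (MeasurableEquiv.addRight x₀).measurableEmbedding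
  have hpre : ∀ ρ : ℝ, T ⁻¹' closedBall x₀ ρ = closedBall (0:EuclideanSpace ℝ (Fin N)) ρ := by
    intro ρ
    ext y
    simp [hTdef, dist_eq_norm]
  set v : EuclideanSpace ℝ (Fin N) → ℝ := fun y => u (y + x₀) with hvdef
  set s' : Set (EuclideanSpace ℝ (Fin N)) := T ⁻¹' s with hs'def
  have hs' : IsOpen s' := hs.preimage (continuous_add_right x₀)
  have hball' : closedBall (0:EuclideanSpace ℝ (Fin N)) R₀ ⊆ s' := by
    rw [hs'def, ← hpre R₀]
    exact preimage_mono hball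
  have hv : ContDiffOn ℝ 1 v s' :=
    hu.comp ((contDiff_id.add contDiff_const).contDiffOn) (fun y hy => hy)
  have hgradeq : ∀ y ∈ closedBall (0:EuclideanSpace ℝ (Fin N)) R₀, gradient v y = gradient u (y + x₀) := by
    intro y hy
    have hd : DifferentiableAt ℝ u (y + x₀) :=
      (hu.differentiableOn one_ne_zero).differentiableAt (hs.mem_nhds (hball' hy))
    have h2 : HasFDerivAt v (fderiv ℝ u (y + x₀)) y := by
      simpa [Function.comp_def] using (hd.hasFDerivAt.comp y ((hasFDerivAt_id y).add_const x₀))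
    rw [h2.hasGradientAt.gradient, hd.hasFDerivAt.hasGradientAt.gradient]
  have htr : ∀ (ρ : ℝ) (F : EuclideanSpace ℝ (Fin N) → ℝ),
      (∫ x in closedBall x₀ ρ, F x) = ∫ y in closedBall (0:EuclideanSpace ℝ (Fin N)) ρ, F (y + x₀) := by
    intro ρ F
    rw [← hpre ρ]
    exact (hT.setIntegral_preimage_emb hTemb F (closedBall x₀ ρ)).symm
  rw [htr R₀ (fun x => (u x) ^ 2 * Real.exp (-‖x - x₀‖ ^ 2 / (4 * lam))),
    htr R₀ (fun x => ‖gradient u x‖ ^ 2 * Real.exp (-‖x - x₀‖ ^ 2 / (4 * lam))),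
    htr r (fun x => (u x) ^ 2 * Real.exp (-‖x - x₀‖ ^ 2 / (4 * lam)))]
  simp only [add_sub_cancel_right]
  have hgr : (∫ y in closedBall (0:EuclideanSpace ℝ (Fin N)) R₀,
        ‖gradient u (y + x₀)‖ ^ 2 * Real.exp (-‖y‖ ^ 2 / (4 * lam)))
      = ∫ y in closedBall (0:EuclideanSpace ℝ (Fin N)) R₀,
        ‖gradient v y‖ ^ 2 * Real.exp (-‖y‖ ^ 2 / (4 * lam)) := by
    refine setIntegral_congr_fun measurableSet_closedBall fun y hy => ?_
    rw [hgradeq y hy]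
  rw [hgr]
  exact centered_splitting hN lam R₀ r hlam hR₀ hr hrR v s' hs' hball' hv
end
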